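/- arXiv:2304.09074 — 2 statements merged into one kernel-verified Lean document; each statement's English description precedes it below -/
import Mathlib

section
/- Let Ω ⊂ ℝ² be a bounded measurable set and k ∈ ℝ² with k ≠ 0. Then for the complex geometric optics functions φ₁, φ₂ for k, ∫_Ω ∇φ₁(x;k) · ∇φ₂(x;k) dx = −2π²|k|² ∫_Ω e^{2πi k·x} dx; that is, the left-hand side equals −2π²|k|² times the Fourier transform χ̂_Ω(k) = ∫_Ω e^{2πi k·x} dx of the characteristic function of Ω. -/
open Real Complex MeasureTheory

/-- First partial derivative `∂₁ f` of `f : ℝ² → ℂ`. -/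
noncomputable def pd1 (f : ℝ × ℝ → ℂ) (x : ℝ × ℝ) : ℂ := fderiv ℝ f x (1, 0)

/-- Second partial derivative `∂₂ f` of `f : ℝ² → ℂ`. -/
noncomputable def pd2 (f : ℝ × ℝ → ℂ) (x : ℝ × ℝ) : ℂ := fderiv ℝ f x (0, 1)

/-- The bilinear (non-conjugated) dot product of gradients:
`∇u · ∇v = ∂₁u ∂₁v + ∂₂u ∂₂v`. -/
noncomputable def gdot (u v : ℝ × ℝ → ℂ) (x : ℝ × ℝ) : ℂ :=
  pd1 u x * pd1 v x + pd2 u x * pd2 v x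

/-- The complex geometric optics function `φ₁(x;k) = exp(πi k·x + π k⊥·x)`,
with `k⊥ = (-k₂,k₁)`. -/
noncomputable def cgo1 (k : ℝ × ℝ) (x : ℝ × ℝ) : ℂ :=
  Complex.exp ((Real.pi : ℂ) * Complex.I * ((k.1 : ℂ) * x.1 + (k.2 : ℂ) * x.2) +
    (Real.pi : ℂ) * ((-(k.2 : ℂ)) * x.1 + (k.1 : ℂ) * x.2))

/-- The complex geometric optics function `φ₂(x;k) = exp(πi k·x − π k⊥·x)`. -/
noncomputable def cgo2 (k : ℝ × ℝ) (x : ℝ × ℝ) : ℂ :=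
  Complex.exp ((Real.pi : ℂ) * Complex.I * ((k.1 : ℂ) * x.1 + (k.2 : ℂ) * x.2) -
    (Real.pi : ℂ) * ((-(k.2 : ℂ)) * x.1 + (k.1 : ℂ) * x.2))

lemma expab_hasFDerivAt (a b : ℂ) (x : ℝ × ℝ) :
    HasFDerivAt (fun x : ℝ × ℝ => Complex.exp (a * x.1 + b * x.2))
      (Complex.exp (a * x.1 + b * x.2) •
        (a • (Complex.ofRealCLM.comp (ContinuousLinearMap.fst ℝ ℝ ℝ)) +
         b • (Complex.ofRealCLM.comp (ContinuousLinearMap.snd ℝ ℝ ℝ)))) x := by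
  have h1 : HasFDerivAt (fun x : ℝ × ℝ => a * (x.1 : ℂ) + b * (x.2 : ℂ))
      (a • (Complex.ofRealCLM.comp (ContinuousLinearMap.fst ℝ ℝ ℝ)) +
       b • (Complex.ofRealCLM.comp (ContinuousLinearMap.snd ℝ ℝ ℝ))) x := by
    have hf : HasFDerivAt (fun x : ℝ × ℝ => ((x.1 : ℂ)))
        (Complex.ofRealCLM.comp (ContinuousLinearMap.fst ℝ ℝ ℝ)) x :=
      (Complex.ofRealCLM.hasFDerivAt.comp x (ContinuousLinearMap.fst ℝ ℝ ℝ).hasFDerivAt)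
    have hs : HasFDerivAt (fun x : ℝ × ℝ => ((x.2 : ℂ)))
        (Complex.ofRealCLM.comp (ContinuousLinearMap.snd ℝ ℝ ℝ)) x :=
      (Complex.ofRealCLM.hasFDerivAt.comp x (ContinuousLinearMap.snd ℝ ℝ ℝ).hasFDerivAt)
    exact (hf.const_mul a).add (hs.const_mul b)
  exact h1.cexp

lemma pd1_expab (a b : ℂ) (x : ℝ × ℝ) :
    pd1 (fun x : ℝ × ℝ => Complex.exp (a * x.1 + b * x.2)) x
      = a * Complex.exp (a * x.1 + b * x.2) := by
  rw [pd1, (expab_hasFDerivAt a b x).fderiv]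
  simp [mul_comm]

lemma pd2_expab (a b : ℂ) (x : ℝ × ℝ) :
    pd2 (fun x : ℝ × ℝ => Complex.exp (a * x.1 + b * x.2)) x
      = b * Complex.exp (a * x.1 + b * x.2) := by
  rw [pd2, (expab_hasFDerivAt a b x).fderiv]
  simp [mul_comm]

/-- For a bounded measurable `Ω ⊂ ℝ²` and `k ≠ 0`,
`∫_Ω ∇φ₁(x;k) · ∇φ₂(x;k) dx = −2π²|k|² ∫_Ω e^{2πik·x} dx`, i.e. `−2π²|k|²` times the
Fourier transform of the characteristic function of `Ω`. -/
theorem calderon_identity_background (Ω : Set (ℝ × ℝ)) (hΩb : Bornology.IsBounded Ω)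
    (hΩm : MeasurableSet Ω) (k : ℝ × ℝ) (hk : k ≠ 0) :
    ∫ x in Ω, gdot (cgo1 k) (cgo2 k) x =
      -2 * (Real.pi : ℂ) ^ 2 * ((k.1 : ℂ) ^ 2 + (k.2 : ℂ) ^ 2) *
        ∫ x in Ω, Complex.exp (2 * (Real.pi : ℂ) * Complex.I *
          ((k.1 : ℂ) * x.1 + (k.2 : ℂ) * x.2)) := by
  set a1 : ℂ := (Real.pi : ℂ) * Complex.I * k.1 - (Real.pi : ℂ) * k.2 with ha1
  set b1 : ℂ := (Real.pi : ℂ) * Complex.I * k.2 + (Real.pi : ℂ) * k.1 with hb1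
  set a2 : ℂ := (Real.pi : ℂ) * Complex.I * k.1 + (Real.pi : ℂ) * k.2 with ha2
  set b2 : ℂ := (Real.pi : ℂ) * Complex.I * k.2 - (Real.pi : ℂ) * k.1 with hb2
  have e1 : cgo1 k = fun x : ℝ × ℝ => Complex.exp (a1 * x.1 + b1 * x.2) := by
    funext x; rw [cgo1]; congr 1; rw [ha1, hb1]; ring
  have e2 : cgo2 k = fun x : ℝ × ℝ => Complex.exp (a2 * x.1 + b2 * x.2) := by
    funext x; rw [cgo2]; congr 1; rw [ha2, hb2]; ring
  have hc : a1 * a2 + b1 * b2 =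
      -2 * (Real.pi : ℂ) ^ 2 * ((k.1 : ℂ) ^ 2 + (k.2 : ℂ) ^ 2) := by
    rw [ha1, ha2, hb1, hb2]
    linear_combination ((Real.pi : ℂ) ^ 2 * ((k.1 : ℂ) ^ 2 + (k.2 : ℂ) ^ 2)) * Complex.I_sq
  have hgd : ∀ x : ℝ × ℝ, gdot (cgo1 k) (cgo2 k) x =
      -2 * (Real.pi : ℂ) ^ 2 * ((k.1 : ℂ) ^ 2 + (k.2 : ℂ) ^ 2) *
        Complex.exp (2 * (Real.pi : ℂ) * Complex.I * ((k.1 : ℂ) * x.1 + (k.2 : ℂ) * x.2)) := by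
    intro x
    rw [gdot, e1, e2, pd1_expab, pd2_expab, pd1_expab, pd2_expab]
    have hEF : Complex.exp (a1 * x.1 + b1 * x.2) * Complex.exp (a2 * x.1 + b2 * x.2)
        = Complex.exp (2 * (Real.pi : ℂ) * Complex.I * ((k.1 : ℂ) * x.1 + (k.2 : ℂ) * x.2)) := by
      rw [← Complex.exp_add]; congr 1; rw [ha1, hb1, ha2, hb2]; ring
    linear_combination (Complex.exp (a1 * x.1 + b1 * x.2) * Complex.exp (a2 * x.1 + b2 * x.2)) * hc
      + (-2 * (Real.pi : ℂ) ^ 2 * ((k.1 : ℂ) ^ 2 + (k.2 : ℂ) ^ 2)) * hEF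
  simp only [hgd]
  rw [MeasureTheory.integral_const_mul]
end

section
/- Let Ω ⊂ ℝ² be a bounded measurable set, k ∈ ℝ² with k ≠ 0, and let φ₁, φ₂ be the complex geometric optics functions for k. Let δ ∈ L^∞(Ω) be complex-valued, set γ = 1 + δ, and let v₁, v₂ : Ω → ℂ be differentiable functions with all appearing gradient dot products integrable over Ω and satisfying ∫_Ω ∇φ₁ · ∇v₂ dx = 0 and ∫_Ω ∇φ₂ · ∇v₁ dx = 0. Define, with ω₁ = φ₁ + v₁ and ω₂ = φ₂ + v₂, F̂(k) = −(1/(2π²|k|²)) [ ∫_Ω γ ∇ω₁ · ∇ω₂ dx − ∫_Ω ∇φ₁ · ∇φ₂ dx ], E(k) = Ẽ(k)/(2π²|k|²), and Ẽ(k) = ∫_Ω [δ(∇φ₁ · ∇v₂ + ∇φ₂ · ∇v₁) + γ ∇v₁ · ∇v₂] dx. Then the Fourier transform δ̂(k) = ∫_Ω δ(x) e^{2πi k·x} dx satisfies δ̂(k) = F̂(k) + E(k). -/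
open Real Complex MeasureTheory

noncomputable def linC (a b : ℂ) : (ℝ × ℝ) →L[ℝ] ℂ :=
  a • ((Complex.ofRealCLM).comp (ContinuousLinearMap.fst ℝ ℝ ℝ)) +
  b • ((Complex.ofRealCLM).comp (ContinuousLinearMap.snd ℝ ℝ ℝ))

lemma linC_apply (a b : ℂ) (v : ℝ × ℝ) : linC a b v = a * v.1 + b * v.2 := by
  simp [linC, smul_eq_mul]

lemma hasFDerivAt_expLin (a b : ℂ) (x : ℝ × ℝ) :
    HasFDerivAt (fun y : ℝ × ℝ => Complex.exp (a * y.1 + b * y.2))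
      (Complex.exp (a * x.1 + b * x.2) • linC a b) x := by
  have hL : HasFDerivAt (fun y : ℝ × ℝ => linC a b y) (linC a b) x :=
    (linC a b).hasFDerivAt
  have hexp : HasDerivAt Complex.exp (Complex.exp (linC a b x)) (linC a b x) :=
    Complex.hasDerivAt_exp _
  have h := hexp.comp_hasFDerivAt x hL
  have hfun : (Complex.exp ∘ fun y : ℝ × ℝ => linC a b y)
      = fun y : ℝ × ℝ => Complex.exp (a * y.1 + b * y.2) := by
    funext y; simp [Function.comp, linC_apply]
  rw [hfun, linC_apply] at h
  exact h

lemma pd1_expLin (a b : ℂ) (x : ℝ × ℝ) :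
    pd1 (fun y : ℝ × ℝ => Complex.exp (a * y.1 + b * y.2)) x
      = a * Complex.exp (a * x.1 + b * x.2) := by
  rw [pd1, (hasFDerivAt_expLin a b x).fderiv]
  simp [linC_apply, smul_eq_mul]
  ring

lemma pd2_expLin (a b : ℂ) (x : ℝ × ℝ) :
    pd2 (fun y : ℝ × ℝ => Complex.exp (a * y.1 + b * y.2)) x
      = b * Complex.exp (a * x.1 + b * x.2) := by
  rw [pd2, (hasFDerivAt_expLin a b x).fderiv]
  simp [linC_apply, smul_eq_mul]
  ring

lemma differentiable_expLin (a b : ℂ) :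
    Differentiable ℝ (fun y : ℝ × ℝ => Complex.exp (a * y.1 + b * y.2)) :=
  fun x => (hasFDerivAt_expLin a b x).differentiableAt

/-- Calderón's reconstruction formula: with `γ = 1 + δ`, `ω₁ = φ₁ + v₁`, `ω₂ = φ₂ + v₂`,
`F̂(k) = −(1/(2π²|k|²))[∫_Ω γ ∇ω₁·∇ω₂ dx − ∫_Ω ∇φ₁·∇φ₂ dx]` and
`E(k) = Ẽ(k)/(2π²|k|²)` with `Ẽ(k) = ∫_Ω [δ(∇φ₁·∇v₂ + ∇φ₂·∇v₁) + γ ∇v₁·∇v₂] dx`,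
the Fourier transform `δ̂(k) = ∫_Ω δ(x) e^{2πik·x} dx` satisfies `δ̂(k) = F̂(k) + E(k)`. -/
theorem calderon_fourier_formula (Ω : Set (ℝ × ℝ)) (hΩb : Bornology.IsBounded Ω)
    (hΩm : MeasurableSet Ω) (k : ℝ × ℝ) (hk : k ≠ 0)
    (δ : ℝ × ℝ → ℂ) (hδ : MemLp δ ⊤ (volume.restrict Ω))
    (γ : ℝ × ℝ → ℂ) (hγ : ∀ x, γ x = 1 + δ x)
    (v₁ v₂ : ℝ × ℝ → ℂ) (hv₁ : Differentiable ℝ v₁) (hv₂ : Differentiable ℝ v₂)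
    (ω₁ ω₂ : ℝ × ℝ → ℂ) (hω₁ : ∀ x, ω₁ x = cgo1 k x + v₁ x)
    (hω₂ : ∀ x, ω₂ x = cgo2 k x + v₂ x)
    (hint₁ : IntegrableOn (fun x => gdot (cgo1 k) v₂ x) Ω)
    (hint₂ : IntegrableOn (fun x => gdot (cgo2 k) v₁ x) Ω)
    (hint₃ : IntegrableOn (fun x => δ x * gdot (cgo1 k) v₂ x) Ω)
    (hint₄ : IntegrableOn (fun x => δ x * gdot (cgo2 k) v₁ x) Ω)
    (hint₅ : IntegrableOn (fun x => γ x * gdot v₁ v₂ x) Ω)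
    (hzero₁ : ∫ x in Ω, gdot (cgo1 k) v₂ x = 0)
    (hzero₂ : ∫ x in Ω, gdot (cgo2 k) v₁ x = 0) :
    ∫ x in Ω, δ x * Complex.exp (2 * (Real.pi : ℂ) * Complex.I *
        ((k.1 : ℂ) * x.1 + (k.2 : ℂ) * x.2)) =
      -(1 / (2 * (Real.pi : ℂ) ^ 2 * ((k.1 : ℂ) ^ 2 + (k.2 : ℂ) ^ 2))) *
        ((∫ x in Ω, γ x * gdot ω₁ ω₂ x) - ∫ x in Ω, gdot (cgo1 k) (cgo2 k) x) +
      (∫ x in Ω, (δ x * (gdot (cgo1 k) v₂ x + gdot (cgo2 k) v₁ x) +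
        γ x * gdot v₁ v₂ x)) / (2 * (Real.pi : ℂ) ^ 2 * ((k.1 : ℂ) ^ 2 + (k.2 : ℂ) ^ 2)) :=  by
  have hπ : ((Real.pi : ℂ)) ≠ 0 := by exact_mod_cast Real.pi_ne_zero
  have hk2 : ((k.1 : ℂ) ^ 2 + (k.2 : ℂ) ^ 2) ≠ 0 := by
    have h0 : (k.1 ^ 2 + k.2 ^ 2 : ℝ) ≠ 0 := by
      intro h
      apply hk
      have h1 : k.1 = 0 := by nlinarith [sq_nonneg k.1, sq_nonneg k.2]
      have h2 : k.2 = 0 := by nlinarith [sq_nonneg k.1, sq_nonneg k.2]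
      exact Prod.ext h1 h2
    exact_mod_cast h0
  set c : ℂ := 2 * (Real.pi : ℂ) ^ 2 * ((k.1 : ℂ) ^ 2 + (k.2 : ℂ) ^ 2) with hc
  have hcne : c ≠ 0 := mul_ne_zero (mul_ne_zero two_ne_zero (pow_ne_zero 2 hπ)) hk2
  set a1 : ℂ := (Real.pi : ℂ) * Complex.I * k.1 - (Real.pi : ℂ) * k.2 with ha1
  set b1 : ℂ := (Real.pi : ℂ) * Complex.I * k.2 + (Real.pi : ℂ) * k.1 with hb1
  set a2 : ℂ := (Real.pi : ℂ) * Complex.I * k.1 + (Real.pi : ℂ) * k.2 with ha2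
  set b2 : ℂ := (Real.pi : ℂ) * Complex.I * k.2 - (Real.pi : ℂ) * k.1 with hb2
  have hφ1 : cgo1 k = fun y : ℝ × ℝ => Complex.exp (a1 * y.1 + b1 * y.2) := by
    funext y; rw [cgo1]; congr 1; rw [ha1, hb1]; ring
  have hφ2 : cgo2 k = fun y : ℝ × ℝ => Complex.exp (a2 * y.1 + b2 * y.2) := by
    funext y; rw [cgo2]; congr 1; rw [ha2, hb2]; ring
  have hd11 : ∀ x, pd1 (cgo1 k) x = a1 * cgo1 k x := by
    intro x; rw [hφ1]; exact pd1_expLin a1 b1 x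
  have hd21 : ∀ x, pd2 (cgo1 k) x = b1 * cgo1 k x := by
    intro x; rw [hφ1]; exact pd2_expLin a1 b1 x
  have hd12 : ∀ x, pd1 (cgo2 k) x = a2 * cgo2 k x := by
    intro x; rw [hφ2]; exact pd1_expLin a2 b2 x
  have hd22 : ∀ x, pd2 (cgo2 k) x = b2 * cgo2 k x := by
    intro x; rw [hφ2]; exact pd2_expLin a2 b2 x
  have hdiff1 : Differentiable ℝ (cgo1 k) := by rw [hφ1]; exact differentiable_expLin a1 b1
  have hdiff2 : Differentiable ℝ (cgo2 k) := by rw [hφ2]; exact differentiable_expLin a2 b2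
  have hcoef : a1 * a2 + b1 * b2 = -c := by
    rw [ha1, ha2, hb1, hb2, hc]
    linear_combination ((Real.pi : ℂ) ^ 2 * ((k.1 : ℂ) ^ 2 + (k.2 : ℂ) ^ 2)) * Complex.I_sq
  have hprod : ∀ x : ℝ × ℝ, cgo1 k x * cgo2 k x
      = Complex.exp (2 * (Real.pi : ℂ) * Complex.I * ((k.1 : ℂ) * x.1 + (k.2 : ℂ) * x.2)) := by
    intro x; rw [cgo1, cgo2, ← Complex.exp_add]; congr 1; ring
  have hgφφ : ∀ x, gdot (cgo1 k) (cgo2 k) x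
      = -c * Complex.exp (2 * (Real.pi : ℂ) * Complex.I * ((k.1 : ℂ) * x.1 + (k.2 : ℂ) * x.2)) := by
    intro x
    rw [gdot, hd11 x, hd21 x, hd12 x, hd22 x, ← hprod x, ← hcoef]
    ring
  -- derivatives of ω
  have hω₁' : ω₁ = fun y => cgo1 k y + v₁ y := funext hω₁
  have hω₂' : ω₂ = fun y => cgo2 k y + v₂ y := funext hω₂
  have hpd1ω₁ : ∀ x, pd1 ω₁ x = pd1 (cgo1 k) x + pd1 v₁ x := by
    intro x
    simp only [pd1, hω₁', fderiv_fun_add (hdiff1 x) (hv₁ x), ContinuousLinearMap.add_apply]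
  have hpd2ω₁ : ∀ x, pd2 ω₁ x = pd2 (cgo1 k) x + pd2 v₁ x := by
    intro x
    simp only [pd2, hω₁', fderiv_fun_add (hdiff1 x) (hv₁ x), ContinuousLinearMap.add_apply]
  have hpd1ω₂ : ∀ x, pd1 ω₂ x = pd1 (cgo2 k) x + pd1 v₂ x := by
    intro x
    simp only [pd1, hω₂', fderiv_fun_add (hdiff2 x) (hv₂ x), ContinuousLinearMap.add_apply]
  have hpd2ω₂ : ∀ x, pd2 ω₂ x = pd2 (cgo2 k) x + pd2 v₂ x := by
    intro x
    simp only [pd2, hω₂', fderiv_fun_add (hdiff2 x) (hv₂ x), ContinuousLinearMap.add_apply]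
  have hgω : ∀ x, gdot ω₁ ω₂ x = gdot (cgo1 k) (cgo2 k) x + gdot (cgo1 k) v₂ x
      + gdot (cgo2 k) v₁ x + gdot v₁ v₂ x := by
    intro x
    simp only [gdot, hpd1ω₁ x, hpd2ω₁ x, hpd1ω₂ x, hpd2ω₂ x]
    ring
  -- the key pointwise identity
  have hpt : ∀ x, γ x * gdot ω₁ ω₂ x
      = gdot (cgo1 k) (cgo2 k) x
        + (-c) * (δ x * Complex.exp (2 * (Real.pi : ℂ) * Complex.I
            * ((k.1 : ℂ) * x.1 + (k.2 : ℂ) * x.2)))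
        + gdot (cgo1 k) v₂ x + gdot (cgo2 k) v₁ x
        + (δ x * gdot (cgo1 k) v₂ x + δ x * gdot (cgo2 k) v₁ x + γ x * gdot v₁ v₂ x) := by
    intro x
    rw [hgω x, hγ x, hgφφ x]
    ring
  -- integrability
  haveI : Fact (volume Ω < ⊤) := ⟨hΩb.measure_lt_top⟩
  have hebd : ∀ x : ℝ × ℝ, ‖Complex.exp (2 * (Real.pi : ℂ) * Complex.I
      * ((k.1 : ℂ) * x.1 + (k.2 : ℂ) * x.2))‖ ≤ 1 := by
    intro x
    rw [Complex.norm_exp]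
    have : (2 * (Real.pi : ℂ) * Complex.I * ((k.1 : ℂ) * x.1 + (k.2 : ℂ) * x.2)).re = 0 := by
      simp [Complex.mul_re, Complex.mul_im]
    rw [this, Real.exp_zero]
  have hecont : Continuous fun x : ℝ × ℝ => Complex.exp (2 * (Real.pi : ℂ) * Complex.I
      * ((k.1 : ℂ) * x.1 + (k.2 : ℂ) * x.2)) := by fun_prop
  have he_int : Integrable (fun x : ℝ × ℝ => Complex.exp (2 * (Real.pi : ℂ) * Complex.I
      * ((k.1 : ℂ) * x.1 + (k.2 : ℂ) * x.2))) (volume.restrict Ω) :=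
    (memLp_top_of_bound hecont.aestronglyMeasurable 1 (ae_of_all _ hebd)).integrable le_top
  have hδint : Integrable δ (volume.restrict Ω) := hδ.integrable le_top
  have hδe : Integrable (fun x => δ x * Complex.exp (2 * (Real.pi : ℂ) * Complex.I
      * ((k.1 : ℂ) * x.1 + (k.2 : ℂ) * x.2))) (volume.restrict Ω) := by
    have h := hδint.bdd_mul hecont.aestronglyMeasurable (ae_of_all _ hebd)
    simpa [mul_comm] using h
  have hA : Integrable (fun x => gdot (cgo1 k) (cgo2 k) x) (volume.restrict Ω) := by
    have h := he_int.const_mul (-c)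
    exact h.congr (ae_of_all _ fun x => (hgφφ x).symm)
  have hB : Integrable (fun x => (-c) * (δ x * Complex.exp (2 * (Real.pi : ℂ) * Complex.I
      * ((k.1 : ℂ) * x.1 + (k.2 : ℂ) * x.2)))) (volume.restrict Ω) := hδe.const_mul (-c)
  -- splitting the main integral
  have hsum : ∫ x in Ω, γ x * gdot ω₁ ω₂ x
      = (∫ x in Ω, gdot (cgo1 k) (cgo2 k) x)
        + (-c) * (∫ x in Ω, δ x * Complex.exp (2 * (Real.pi : ℂ) * Complex.I
            * ((k.1 : ℂ) * x.1 + (k.2 : ℂ) * x.2)))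
        + (∫ x in Ω, gdot (cgo1 k) v₂ x) + (∫ x in Ω, gdot (cgo2 k) v₁ x)
        + ((∫ x in Ω, δ x * gdot (cgo1 k) v₂ x) + (∫ x in Ω, δ x * gdot (cgo2 k) v₁ x)
            + (∫ x in Ω, γ x * gdot v₁ v₂ x)) := by
    have I34 : (∫ x in Ω, (δ x * gdot (cgo1 k) v₂ x + δ x * gdot (cgo2 k) v₁ x))
        = (∫ x in Ω, δ x * gdot (cgo1 k) v₂ x) + ∫ x in Ω, δ x * gdot (cgo2 k) v₁ x :=
      integral_add hint₃ hint₄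
    have I345 : (∫ x in Ω, (δ x * gdot (cgo1 k) v₂ x + δ x * gdot (cgo2 k) v₁ x
          + γ x * gdot v₁ v₂ x))
        = (∫ x in Ω, (δ x * gdot (cgo1 k) v₂ x + δ x * gdot (cgo2 k) v₁ x))
          + ∫ x in Ω, γ x * gdot v₁ v₂ x :=
      integral_add (hint₃.add hint₄) hint₅
    have IAB : (∫ x in Ω, (gdot (cgo1 k) (cgo2 k) x
          + (-c) * (δ x * Complex.exp (2 * (Real.pi : ℂ) * Complex.I
            * ((k.1 : ℂ) * x.1 + (k.2 : ℂ) * x.2)))))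
        = (∫ x in Ω, gdot (cgo1 k) (cgo2 k) x)
          + ∫ x in Ω, (-c) * (δ x * Complex.exp (2 * (Real.pi : ℂ) * Complex.I
            * ((k.1 : ℂ) * x.1 + (k.2 : ℂ) * x.2))) :=
      integral_add hA hB
    have IAB1 : (∫ x in Ω, (gdot (cgo1 k) (cgo2 k) x
          + (-c) * (δ x * Complex.exp (2 * (Real.pi : ℂ) * Complex.I
            * ((k.1 : ℂ) * x.1 + (k.2 : ℂ) * x.2)))
          + gdot (cgo1 k) v₂ x))
        = (∫ x in Ω, (gdot (cgo1 k) (cgo2 k) x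
          + (-c) * (δ x * Complex.exp (2 * (Real.pi : ℂ) * Complex.I
            * ((k.1 : ℂ) * x.1 + (k.2 : ℂ) * x.2)))))
          + ∫ x in Ω, gdot (cgo1 k) v₂ x :=
      integral_add (hA.add hB) hint₁
    have IAB12 : (∫ x in Ω, (gdot (cgo1 k) (cgo2 k) x
          + (-c) * (δ x * Complex.exp (2 * (Real.pi : ℂ) * Complex.I
            * ((k.1 : ℂ) * x.1 + (k.2 : ℂ) * x.2)))
          + gdot (cgo1 k) v₂ x + gdot (cgo2 k) v₁ x))
        = (∫ x in Ω, (gdot (cgo1 k) (cgo2 k) x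
          + (-c) * (δ x * Complex.exp (2 * (Real.pi : ℂ) * Complex.I
            * ((k.1 : ℂ) * x.1 + (k.2 : ℂ) * x.2)))
          + gdot (cgo1 k) v₂ x))
          + ∫ x in Ω, gdot (cgo2 k) v₁ x :=
      integral_add ((hA.add hB).add hint₁) hint₂
    have Ibig : (∫ x in Ω, (gdot (cgo1 k) (cgo2 k) x
          + (-c) * (δ x * Complex.exp (2 * (Real.pi : ℂ) * Complex.I
            * ((k.1 : ℂ) * x.1 + (k.2 : ℂ) * x.2)))
          + gdot (cgo1 k) v₂ x + gdot (cgo2 k) v₁ x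
          + (δ x * gdot (cgo1 k) v₂ x + δ x * gdot (cgo2 k) v₁ x + γ x * gdot v₁ v₂ x)))
        = (∫ x in Ω, (gdot (cgo1 k) (cgo2 k) x
          + (-c) * (δ x * Complex.exp (2 * (Real.pi : ℂ) * Complex.I
            * ((k.1 : ℂ) * x.1 + (k.2 : ℂ) * x.2)))
          + gdot (cgo1 k) v₂ x + gdot (cgo2 k) v₁ x))
          + ∫ x in Ω, (δ x * gdot (cgo1 k) v₂ x + δ x * gdot (cgo2 k) v₁ x
            + γ x * gdot v₁ v₂ x) :=
      integral_add (((hA.add hB).add hint₁).add hint₂) ((hint₃.add hint₄).add hint₅)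
    have IB : (∫ x in Ω, (-c) * (δ x * Complex.exp (2 * (Real.pi : ℂ) * Complex.I
          * ((k.1 : ℂ) * x.1 + (k.2 : ℂ) * x.2))))
        = (-c) * ∫ x in Ω, δ x * Complex.exp (2 * (Real.pi : ℂ) * Complex.I
          * ((k.1 : ℂ) * x.1 + (k.2 : ℂ) * x.2)) :=
      integral_const_mul (-c) _
    rw [integral_congr_ae (ae_of_all _ hpt), Ibig, IAB12, IAB1, IAB, I345, I34, IB]
  have hE' : (∫ x in Ω, (δ x * (gdot (cgo1 k) v₂ x + gdot (cgo2 k) v₁ x) + γ x * gdot v₁ v₂ x))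
      = (∫ x in Ω, δ x * gdot (cgo1 k) v₂ x) + (∫ x in Ω, δ x * gdot (cgo2 k) v₁ x)
        + (∫ x in Ω, γ x * gdot v₁ v₂ x) := by
    have hpt2 : ∀ x, δ x * (gdot (cgo1 k) v₂ x + gdot (cgo2 k) v₁ x) + γ x * gdot v₁ v₂ x
        = δ x * gdot (cgo1 k) v₂ x + δ x * gdot (cgo2 k) v₁ x + γ x * gdot v₁ v₂ x := by
      intro x; ring
    have I34 : (∫ x in Ω, (δ x * gdot (cgo1 k) v₂ x + δ x * gdot (cgo2 k) v₁ x))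
        = (∫ x in Ω, δ x * gdot (cgo1 k) v₂ x) + ∫ x in Ω, δ x * gdot (cgo2 k) v₁ x :=
      integral_add hint₃ hint₄
    have I345 : (∫ x in Ω, (δ x * gdot (cgo1 k) v₂ x + δ x * gdot (cgo2 k) v₁ x
          + γ x * gdot v₁ v₂ x))
        = (∫ x in Ω, (δ x * gdot (cgo1 k) v₂ x + δ x * gdot (cgo2 k) v₁ x))
          + ∫ x in Ω, γ x * gdot v₁ v₂ x :=
      integral_add (hint₃.add hint₄) hint₅
    rw [integral_congr_ae (ae_of_all _ hpt2), I345, I34]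
  rw [hsum, hE', hzero₁, hzero₂]
  field_simp
  ring
end
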